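/- Let p be a prime and q a power of p. If f_1, …, f_m ∈ 𝔽_q[[t]] are linearly independent over the subfield 𝔽_q(t) of the Laurent series field 𝔽_q((t)), then f_1^p, …, f_m^p are also linearly independent over 𝔽_q(t). -/

import Mathlib

open Polynomial HahnSeries
open scoped RatFunc

/-- Decomposition of a polynomial over a perfect field of characteristic `p` as
`∑_{j<p} X^j * (d j)^p`. -/
lemma polyDecomp {K : Type*} [Field K] (p : ℕ) [Fact p.Prime] [CharP K p]
    [PerfectRing K p] (c : K[X]) :
    ∃ d : ℕ → K[X], c = ∑ j ∈ Finset.range p, X ^ j * (d j) ^ p := by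
  have hp : 0 < p := (Fact.out : p.Prime).pos
  induction c using Polynomial.induction_on' with
  | add f g hf hg =>
    obtain ⟨d, hd⟩ := hf
    obtain ⟨d', hd'⟩ := hg
    refine ⟨d + d', ?_⟩
    rw [hd, hd', ← Finset.sum_add_distrib]
    refine Finset.sum_congr rfl fun j _ => ?_
    rw [Pi.add_apply, add_pow_char, mul_add]
  | monomial n a =>
    refine ⟨fun j => if j = n % p then monomial (n / p) ((frobeniusEquiv K p).symm a) else 0, ?_⟩
    rw [Finset.sum_eq_single_of_mem (n % p) (Finset.mem_range.2 (Nat.mod_lt _ hp))]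
    · beta_reduce
      rw [if_pos rfl, monomial_pow, X_pow_eq_monomial, monomial_mul_monomial, one_mul]
      have h : ((frobeniusEquiv K p).symm a) ^ p = a := by
        have := (frobeniusEquiv K p).apply_symm_apply a
        rwa [frobeniusEquiv_apply, frobenius_def] at this
      rw [h, Nat.mod_add_div']
    · intro j _ hj
      beta_reduce
      rw [if_neg hj, zero_pow hp.ne', mul_zero]

/-- `1, t, …, t^{p-1}` are independent over `p`-th powers in Laurent series. -/
lemma keyIndep {K : Type*} [Field K] (p : ℕ) (hp : 0 < p) (g : ℕ → LaurentSeries K)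
    (h : ∑ j ∈ Finset.range p, (HahnSeries.single (1 : ℤ) (1 : K)) ^ j * (g j) ^ p = 0) :
    ∀ j ∈ Finset.range p, g j = 0 := by
  classical
  by_contra hcon
  push_neg at hcon
  obtain ⟨j1, hj1, hg1⟩ := hcon
  set S : Finset ℕ := (Finset.range p).filter (fun j => g j ≠ 0) with hS
  have hSne : S.Nonempty := ⟨j1, Finset.mem_filter.2 ⟨hj1, hg1⟩⟩
  obtain ⟨j0, hj0S, hmin⟩ := S.exists_min_image (fun j => (j : ℤ) + p * (g j).order) hSne
  have hj0r : j0 ∈ Finset.range p := (Finset.mem_filter.1 hj0S).1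
  have hgj0 : g j0 ≠ 0 := (Finset.mem_filter.1 hj0S).2
  set T : ℕ → LaurentSeries K :=
    fun j => (HahnSeries.single (1 : ℤ) (1 : K)) ^ j * (g j) ^ p with hT
  have hsingle : (HahnSeries.single (1 : ℤ) (1 : K)) ≠ 0 :=
    HahnSeries.single_ne_zero one_ne_zero
  have hordT : ∀ j, g j ≠ 0 → T j ≠ 0 ∧ (T j).order = (j : ℤ) + p * (g j).order := by
    intro j hgj
    have h1 : (HahnSeries.single (1 : ℤ) (1 : K)) ^ j ≠ 0 := pow_ne_zero _ hsingle
    have h2 : (g j) ^ p ≠ 0 := pow_ne_zero _ hgj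
    refine ⟨mul_ne_zero h1 h2, ?_⟩
    rw [hT, HahnSeries.order_mul h1 h2, HahnSeries.order_pow, HahnSeries.order_pow,
      HahnSeries.order_single one_ne_zero]
    simp [nsmul_eq_mul]
  set z : ℤ := (j0 : ℤ) + p * (g j0).order with hz
  have hsum : ∑ j ∈ Finset.range p, (T j).coeff z = 0 := by
    have h0 : (∑ j ∈ Finset.range p, T j).coeff z = 0 := by rw [h, HahnSeries.coeff_zero]
    calc ∑ j ∈ Finset.range p, (T j).coeff z
        = (∑ j ∈ Finset.range p, T j).coeff z :=
          (map_sum (HahnSeries.coeff.addMonoidHom z) T (Finset.range p)).symm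
      _ = 0 := h0
  rw [Finset.sum_eq_single_of_mem j0 hj0r] at hsum
  · apply HahnSeries.coeff_order_eq_zero.not.mpr (hordT j0 hgj0).1
    rwa [(hordT j0 hgj0).2]
  · intro j hjr hjne
    by_cases hgj : g j = 0
    · simp [hT, hgj, zero_pow hp.ne']
    · apply HahnSeries.coeff_eq_zero_of_lt_order
      rw [(hordT j hgj).2]
      have hle : z ≤ (j : ℤ) + p * (g j).order :=
        hmin j (Finset.mem_filter.2 ⟨hjr, hgj⟩)
      rcases lt_or_eq_of_le hle with hlt | heq
      · exact hlt
      · exfalso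
        apply hjne
        have hmod : (j : ℤ) % p = (j0 : ℤ) % p := by
          have h1 : ((j : ℤ) + (p : ℤ) * (g j).order) % p
              = ((j0 : ℤ) + (p : ℤ) * (g j0).order) % p := by rw [← heq]
          simpa [Int.add_mul_emod_self_left] using h1
        have hj0p : (j0 : ℤ) % p = (j0 : ℤ) :=
          Int.emod_eq_of_lt (by positivity) (by exact_mod_cast Finset.mem_range.1 hj0r)
        have hjp : (j : ℤ) % p = (j : ℤ) :=
          Int.emod_eq_of_lt (by positivity) (by exact_mod_cast Finset.mem_range.1 hjr)
        have : (j : ℤ) = (j0 : ℤ) := by rw [← hjp, ← hj0p, hmod]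
        exact_mod_cast this

theorem stmt6 (p : ℕ) [Fact p.Prime] (e : ℕ) (he : 1 ≤ e)
    {K : Type*} [Field K] [Fintype K] (hK : Fintype.card K = p ^ e)
    (m : ℕ) (f : Fin m → PowerSeries K)
    (hf : LinearIndependent (RatFunc K)
      (fun i : Fin m => (HahnSeries.ofPowerSeries ℤ K (f i) : LaurentSeries K))) :
    LinearIndependent (RatFunc K)
      (fun i : Fin m => (HahnSeries.ofPowerSeries ℤ K (f i ^ p) : LaurentSeries K)) := by
  have hpp : p.Prime := Fact.out
  have hp : 0 < p := hpp.pos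
  -- `K` has characteristic `p`
  haveI : CharP K p := by
    have hr : (ringChar K).Prime := CharP.char_is_prime K _
    obtain ⟨n, hn⟩ := FiniteField.card K (ringChar K)
    have : p ∣ ringChar K := by
      have hdvd : p ∣ (ringChar K) ^ (n : ℕ) := by
        rw [← hn.2, hK]
        exact dvd_pow_self p (by omega)
      exact hpp.dvd_of_dvd_pow hdvd
    have : p = ringChar K := ((Nat.prime_dvd_prime_iff_eq hpp hr).1 this)
    rw [this]
    exact ringChar.charP K
  haveI : CharP (LaurentSeries K) p :=
    charP_of_injective_ringHom
      (HahnSeries.C_injective (R := K) (Γ := ℤ) : Function.Injective (HahnSeries.C : K →+* HahnSeries ℤ K)) p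
  rw [← LinearIndependent.iff_fractionRing (Polynomial K) (RatFunc K)] at hf ⊢
  rw [Fintype.linearIndependent_iff] at hf ⊢
  intro c hc i
  choose d hd using fun i => polyDecomp p (c i)
  set A := algebraMap (Polynomial K) (LaurentSeries K) with hA
  set F : Fin m → LaurentSeries K := fun i => HahnSeries.ofPowerSeries ℤ K (f i) with hF
  set g : ℕ → LaurentSeries K := fun j => ∑ i, A (d i j) * F i with hg
  have key : ∑ j ∈ Finset.range p, (HahnSeries.single (1 : ℤ) (1 : K)) ^ j * (g j) ^ p = 0 := by
    have hAX : A Polynomial.X = HahnSeries.single (1 : ℤ) (1 : K) := by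
      rw [hA, Polynomial.algebraMap_hahnSeries_apply, Polynomial.coe_X,
        HahnSeries.ofPowerSeries_X]
    calc ∑ j ∈ Finset.range p, (HahnSeries.single (1 : ℤ) (1 : K)) ^ j * (g j) ^ p
        = ∑ j ∈ Finset.range p, ∑ i, (A Polynomial.X) ^ j * (A (d i j) * F i) ^ p := by
          refine Finset.sum_congr rfl fun j _ => ?_
          rw [hAX, hg, sum_pow_char, Finset.mul_sum]
      _ = ∑ i, ∑ j ∈ Finset.range p, (A Polynomial.X) ^ j * (A (d i j) * F i) ^ p :=
          Finset.sum_comm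
      _ = ∑ i, c i • (HahnSeries.ofPowerSeries ℤ K (f i ^ p) : LaurentSeries K) := by
          refine Finset.sum_congr rfl fun i _ => ?_
          rw [Algebra.smul_def, map_pow (HahnSeries.ofPowerSeries ℤ K) (f i) p, hd i, map_sum,
            Finset.sum_mul]
          refine Finset.sum_congr rfl fun j _ => ?_
          simp only [map_mul, map_pow, mul_pow, hF, hA]
          ring
      _ = 0 := hc
  have hgz : ∀ j ∈ Finset.range p, g j = 0 := keyIndep p hp g key
  have hdz : ∀ j ∈ Finset.range p, ∀ i, d i j = 0 := by
    intro j hj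
    apply hf
    have he : ∑ i, d i j • F i = g j :=
      Finset.sum_congr rfl fun i _ => Algebra.smul_def _ _
    rw [he, hgz j hj]
  rw [hd i, Finset.sum_eq_zero]
  intro j hj
  rw [hdz j hj i, zero_pow hp.ne', mul_zero]
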